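/- arXiv:1805.08012 — 2 statements merged into one kernel-verified Lean document; each statement's English description precedes it below -/
import Mathlib

section
/- Suppose ‖u‖² = Σ_{i=1}^{k} D_i + C where D_i ≥ 0 and C ≥ 0, and suppose D_i ≤ ‖u‖^{2p_i}/S_i^{p_i} and C ≤ ‖u‖^{q}/S^{q/2} with S_i, S > 0, q > 2, p_i > q/2. If ‖u‖ > 0, then either ‖u‖ ≥ κ^{1/(2−2p₁)} or ‖u‖ ≥ κ^{1/(2−q)}, where κ = S^{−q/2} + Σᵢ S_i^{−p_i} and p₁ = max_i p_i, provided in addition p_k < ⋯ < p₁. -/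
open Real Finset

lemma aux_rpow (t κ r : ℝ) (ht : 0 < t) (hκ : 0 < κ) (hr : 1 < r)
    (h : t ≤ κ * t ^ r) : κ ^ (1 / (2 - 2 * r)) ≤ t ^ ((1 : ℝ) / 2) := by
  have hne : (1 : ℝ) - r ≠ 0 := by nlinarith
  have h1 : t ^ ((1 : ℝ) - r) ≤ κ := by
    have h2 : t ^ ((1 : ℝ) - r) = t * t ^ (-r) := by
      rw [Real.rpow_sub ht, Real.rpow_one, Real.rpow_neg ht.le, div_eq_mul_inv]
    have h3 : κ * t ^ r * t ^ (-r) = κ := by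
      rw [mul_assoc, ← Real.rpow_add ht]; simp
    rw [h2, ← h3]
    exact mul_le_mul_of_nonneg_right h (Real.rpow_nonneg ht.le _)
  have hz : 1 / (1 - r) ≤ 0 := by
    apply div_nonpos_of_nonneg_of_nonpos <;> nlinarith
  have h4 : κ ^ (1 / (1 - r)) ≤ (t ^ ((1 : ℝ) - r)) ^ (1 / (1 - r)) :=
    Real.rpow_le_rpow_of_nonpos (Real.rpow_pos_of_pos ht _) h1 hz
  rw [← Real.rpow_mul ht.le] at h4
  rw [show (1 - r) * (1 / (1 - r)) = 1 by field_simp] at h4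
  rw [Real.rpow_one] at h4
  have h5 := Real.rpow_le_rpow (Real.rpow_nonneg hκ.le _) h4 (by norm_num : (0:ℝ) ≤ 1/2)
  rwa [← Real.rpow_mul hκ.le, show 1 / (1 - r) * (1 / 2) = 1 / (2 - 2 * r) by
    rw [div_mul_div_comm]; ring_nf] at h5

theorem nehari_norm_dichotomy (k : ℕ) (hk : 1 ≤ k)
    (u q S κ : ℝ) (S' : Fin k → ℝ) (p : Fin k → ℝ) (D : Fin k → ℝ) (C : ℝ)
    (hu : 0 < u) (hq : 2 < q) (hS : 0 < S) (hS' : ∀ i, 0 < S' i)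
    (hpq : ∀ i, q / 2 < p i)
    (hpanti : StrictAnti p)
    (hD : ∀ i, 0 ≤ D i) (hC : 0 ≤ C)
    (hsum : u ^ (2 : ℝ) = (∑ i, D i) + C)
    (hDi : ∀ i, D i ≤ (u ^ (2 : ℝ) / S' i) ^ (p i))
    (hCb : C ≤ (u ^ (2 : ℝ) / S) ^ (q / 2))
    (hκ : κ = S ^ (-(q / 2)) + ∑ i, (S' i) ^ (-(p i)))
    (i₀ : Fin k) (hi₀ : ∀ i, p i ≤ p i₀) :
    κ ^ (1 / (2 - 2 * p i₀)) ≤ u ∨ κ ^ (1 / (2 - q)) ≤ u := by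
  set t := u ^ (2 : ℝ) with htdef
  have ht : 0 < t := Real.rpow_pos_of_pos hu _
  have hκpos : 0 < κ := by
    rw [hκ]
    have h0 : 0 ≤ ∑ i, (S' i) ^ (-(p i)) :=
      Finset.sum_nonneg fun i _ => (Real.rpow_pos_of_pos (hS' i) _).le
    have := Real.rpow_pos_of_pos hS (-(q / 2))
    linarith
  have htu : t ^ ((1 : ℝ) / 2) = u := by
    rw [htdef, ← Real.rpow_mul hu.le]; norm_num
  have hDi' : ∀ i, D i ≤ t ^ (p i) * (S' i) ^ (-(p i)) := fun i => by
    rw [Real.rpow_neg (hS' i).le, ← div_eq_mul_inv, ← Real.div_rpow ht.le (hS' i).le]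
    exact hDi i
  have hCb' : C ≤ t ^ (q / 2) * S ^ (-(q / 2)) := by
    rw [Real.rpow_neg hS.le, ← div_eq_mul_inv, ← Real.div_rpow ht.le hS.le]
    exact hCb
  have hκmul : ∀ r : ℝ, (∑ i, t ^ r * (S' i) ^ (-(p i))) + t ^ r * S ^ (-(q / 2))
      = κ * t ^ r := by
    intro r
    have hc : ∀ a : ℝ, t ^ r * a = a * t ^ r := fun a => mul_comm _ _
    simp_rw [hc]
    rw [hκ, add_mul, Finset.sum_mul, add_comm]
  rcases le_or_gt 1 t with h1t | ht1
  · left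
    have hr' : 1 < p i₀ := by have := hpq i₀; linarith
    have hkey : t ≤ κ * t ^ (p i₀) := by
      rw [← hκmul (p i₀)]
      nth_rewrite 1 [hsum]
      refine add_le_add (Finset.sum_le_sum fun i _ => le_trans (hDi' i) ?_)
        (le_trans hCb' ?_)
      · exact mul_le_mul_of_nonneg_right
          (Real.rpow_le_rpow_of_exponent_le h1t (hi₀ i))
          (Real.rpow_pos_of_pos (hS' i) _).le
      · exact mul_le_mul_of_nonneg_right
          (Real.rpow_le_rpow_of_exponent_le h1t (le_of_lt (hpq i₀)))
          (Real.rpow_pos_of_pos hS _).le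
    have := aux_rpow t κ (p i₀) ht hκpos hr' hkey
    rwa [htu] at this
  · right
    have hr' : 1 < q / 2 := by linarith
    have hkey : t ≤ κ * t ^ (q / 2) := by
      rw [← hκmul (q / 2)]
      nth_rewrite 1 [hsum]
      refine add_le_add (Finset.sum_le_sum fun i _ => le_trans (hDi' i) ?_) hCb'
      exact mul_le_mul_of_nonneg_right
        (Real.rpow_le_rpow_of_exponent_ge ht ht1.le (hpq i).le)
        (Real.rpow_pos_of_pos (hS' i) _).le
    have := aux_rpow t κ (q / 2) ht hκpos hr' hkey
    rwa [htu, show 2 - 2 * (q / 2) = 2 - q by ring] at this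
end

section
/- Let S̃ = πN(N−2)·(Γ(N/2)/Γ(N))^{2/N}. Then for every integer N ≥ 3, S̃ > 1. -/
open Real

theorem sobolev_constant_gt_one (N : ℕ) (hN : 3 ≤ N) :
    1 < π * (N : ℝ) * ((N : ℝ) - 2) *
      (Real.Gamma ((N : ℝ) / 2) / Real.Gamma (N : ℝ)) ^ (2 / (N : ℝ)) := by
  have hN3 : (3 : ℝ) ≤ (N : ℝ) := by exact_mod_cast hN
  have hNpos : (0 : ℝ) < N := by linarith
  have hpi := Real.pi_gt_three
  have hA : (0 : ℝ) < π * (N : ℝ) * ((N : ℝ) - 2) :=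
    mul_pos (mul_pos Real.pi_pos hNpos) (by linarith)
  set A := π * (N : ℝ) * ((N : ℝ) - 2) with hAdef
  have hG2 : 0 < Real.Gamma ((N : ℝ) / 2) := Real.Gamma_pos_of_pos (by linarith)
  have hGN : 0 < Real.Gamma (N : ℝ) := Real.Gamma_pos_of_pos (by linarith)
  set r := Real.Gamma ((N : ℝ) / 2) / Real.Gamma (N : ℝ) with hrdef
  have hr : 0 < r := div_pos hG2 hGN
  -- lower bound Γ(N/2) ≥ 1/2
  have hhalf : (1 / 2 : ℝ) ≤ Real.Gamma ((N : ℝ) / 2) := by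
    rcases eq_or_lt_of_le hN with h3 | h4
    · have hN3' : (N : ℝ) = 3 := by exact_mod_cast h3.symm
      rw [hN3']
      have h32 : (3 : ℝ) / 2 = 1 / 2 + 1 := by norm_num
      rw [h32, Real.Gamma_add_one (by norm_num), Real.Gamma_one_half_eq]
      nlinarith [Real.sq_sqrt Real.pi_pos.le, Real.sqrt_nonneg π]
    · have h4 : (4 : ℕ) ≤ N := h4
      have h2 : (2 : ℝ) ≤ (N : ℝ) / 2 := by
        have : (4 : ℝ) ≤ (N : ℝ) := by exact_mod_cast h4
        linarith
      have hmono := Real.Gamma_strictMonoOn_Ici.monotoneOn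
        (Set.self_mem_Ici) (Set.mem_Ici.mpr h2) h2
      rw [Real.Gamma_two] at hmono
      linarith
  -- Γ(N) = (N-1)!
  have hfact : Real.Gamma (N : ℝ) = (Nat.factorial (N - 1) : ℝ) := by
    obtain ⟨M, rfl⟩ : ∃ M, N = M + 1 := ⟨N - 1, by omega⟩
    simp only [Nat.add_sub_cancel]
    rw [show ((M + 1 : ℕ) : ℝ) = (M : ℝ) + 1 by push_cast; ring,
      Real.Gamma_nat_eq_factorial]
  -- factorial bound
  have hfb : ((N - 1).factorial : ℝ) ≤ (N : ℝ) ^ (N - 1) := by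
    have h1 : (N - 1).factorial ≤ (N - 1) ^ (N - 1) := Nat.factorial_le_pow _
    have h2 : (N - 1) ^ (N - 1) ≤ N ^ (N - 1) := Nat.pow_le_pow_left (by omega) _
    exact_mod_cast h1.trans h2
  -- N^2 ≤ A
  have hN2A : ((N : ℝ)) ^ 2 ≤ A := by
    have h1 : (N : ℝ) ≤ π * ((N : ℝ) - 2) := by nlinarith
    have h2 := mul_le_mul_of_nonneg_left h1 hNpos.le
    rw [hAdef]; nlinarith
  -- key: (Γ(N)/Γ(N/2))^2 < A^N
  have hkey : (Real.Gamma (N : ℝ) / Real.Gamma ((N : ℝ) / 2)) ^ 2 < A ^ N := by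
    have h1 : Real.Gamma (N : ℝ) / Real.Gamma ((N : ℝ) / 2) ≤ 2 * Real.Gamma (N : ℝ) := by
      rw [div_le_iff₀ hG2]
      nlinarith
    have h0 : 0 ≤ Real.Gamma (N : ℝ) / Real.Gamma ((N : ℝ) / 2) := by positivity
    have h2 : (Real.Gamma (N : ℝ) / Real.Gamma ((N : ℝ) / 2)) ^ 2
        ≤ 4 * ((N : ℝ) ^ (N - 1)) ^ 2 := by
      have := hfact ▸ hfb
      nlinarith
    have e1 : ((N : ℝ) ^ (N - 1)) ^ 2 = (N : ℝ) ^ (2 * N - 2) := by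
      rw [← pow_mul]; congr 1; omega
    have e2 : (N : ℝ) ^ (2 * N) = (N : ℝ) ^ (2 * N - 2) * (N : ℝ) ^ 2 := by
      rw [← pow_add]; congr 1; omega
    have e3 : ((N : ℝ) ^ 2) ^ N = (N : ℝ) ^ (2 * N) := by
      rw [← pow_mul]
    have hposp : (0 : ℝ) < (N : ℝ) ^ (2 * N - 2) := by positivity
    have h3 : 4 * ((N : ℝ) ^ (N - 1)) ^ 2 < ((N : ℝ) ^ 2) ^ N := by
      rw [e1, e3, e2]
      have h9 : (9 : ℝ) ≤ (N : ℝ) ^ 2 := by nlinarith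
      nlinarith
    have h4 : ((N : ℝ) ^ 2) ^ N ≤ A ^ N := pow_le_pow_left₀ (by positivity) hN2A N
    linarith
  -- hence Γ(N)/Γ(N/2) < sqrt (A^N)
  have hsq : Real.Gamma (N : ℝ) / Real.Gamma ((N : ℝ) / 2) < Real.sqrt (A ^ N) :=
    Real.lt_sqrt_of_sq_lt hkey
  have hkey2 : 1 < Real.sqrt (A ^ N) * r := by
    rw [hrdef]
    rw [div_lt_iff₀ hG2] at hsq
    rw [show Real.sqrt (A ^ N) * (Real.Gamma ((N : ℝ) / 2) / Real.Gamma (N : ℝ))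
        = Real.sqrt (A ^ N) * Real.Gamma ((N : ℝ) / 2) / Real.Gamma (N : ℝ) by ring]
    rw [lt_div_iff₀ hGN]
    linarith
  -- A^(N/2) = sqrt (A^N)
  have hApow : A ^ ((N : ℝ) / 2) = Real.sqrt (A ^ N) := by
    rw [Real.sqrt_eq_rpow, ← Real.rpow_natCast A N, ← Real.rpow_mul hA.le]
    congr 1
    ring
  -- (A * r^(2/N))^(N/2) = A^(N/2) * r
  have hexp : (A * r ^ (2 / (N : ℝ))) ^ ((N : ℝ) / 2)
      = A ^ ((N : ℝ) / 2) * r := by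
    have hone : (2 / (N : ℝ)) * ((N : ℝ) / 2) = 1 := by field_simp
    rw [Real.mul_rpow hA.le (Real.rpow_nonneg hr.le _), ← Real.rpow_mul hr.le, hone,
      Real.rpow_one]
  have hfin : 1 < (A * r ^ (2 / (N : ℝ))) ^ ((N : ℝ) / 2) := by
    rw [hexp, hApow]; exact hkey2
  have hxpos : 0 < A * r ^ (2 / (N : ℝ)) := by positivity
  rcases (Real.one_lt_rpow_iff_of_pos hxpos).mp hfin with ⟨h, _⟩ | ⟨_, hp⟩
  · exact h
  · exfalso; have : (0 : ℝ) < (N : ℝ) / 2 := by linarith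
    linarith
end
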